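/- Let X and Y be compact Hausdorff spaces and τ : Y → X a continuous irreducible surjection. If Y is an almost-P space (has no proper dense cozero-set), then X is an almost-P space. -/

import Mathlib

theorem stmt_18 {X Y : Type*} [TopologicalSpace X] [TopologicalSpace Y]
    [CompactSpace X] [T2Space X] [CompactSpace Y] [T2Space Y]
    (τ : Y → X) (hcont : Continuous τ) (hsurj : Function.Surjective τ)
    (hirr : ∀ F : Set Y, IsClosed F → F ≠ Set.univ → τ '' F ≠ Set.univ)
    (hY : ∀ f : C(Y, ℝ), Dense {y | f y ≠ 0} → {y | f y ≠ 0} = Set.univ) :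
    ∀ f : C(X, ℝ), Dense {x | f x ≠ 0} → {x | f x ≠ 0} = Set.univ := by
  intro f hf
  set U : Set X := {x | f x ≠ 0} with hU
  -- preimage of the dense open set U under τ is dense
  have hdense : Dense (τ ⁻¹' U) := by
    rw [dense_iff_inter_open]
    intro V hV hVne
    rw [Set.nonempty_iff_ne_empty]
    intro hcon
    have hFne : Vᶜ ≠ Set.univ := by
      obtain ⟨y, hy⟩ := hVne
      intro h
      exact (h ▸ Set.mem_univ y : y ∈ Vᶜ) hy
    have hcl : IsClosed (τ '' Vᶜ) := (hV.isClosed_compl.isCompact.image hcont).isClosed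
    have hsub : U ⊆ τ '' Vᶜ := by
      intro x hx
      obtain ⟨y, rfl⟩ := hsurj x
      refine ⟨y, fun hyV => ?_, rfl⟩
      exact Set.eq_empty_iff_forall_notMem.1 hcon y ⟨hyV, hx⟩
    refine hirr Vᶜ hV.isClosed_compl hFne ?_
    have : closure U ⊆ τ '' Vᶜ := hcl.closure_subset_iff.2 hsub
    rw [hf.closure_eq] at this
    exact Set.eq_univ_of_univ_subset this
  -- apply hY to f ∘ τ
  have key := hY (f.comp ⟨τ, hcont⟩) (by simpa [hU] using hdense)
  simp only [ContinuousMap.comp_apply, ContinuousMap.coe_mk] at key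
  apply Set.eq_univ_of_forall
  intro x
  obtain ⟨y, rfl⟩ := hsurj x
  have : y ∈ {y | f (τ y) ≠ 0} := key ▸ Set.mem_univ y
  exact this
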